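/- Let m ≥ 2, 0 < ρ₁,…,ρ_m < 1 with ρ₁+⋯+ρ_m < 1, γ = (1−ρ₁−⋯−ρ_m)/(m−1), and let K be the attractor of the IFS {φᵢ(x) = ρᵢx + Σ_{k<i} ρ_k + (i−1)γ}. If f is a contractive similitude on ℝ with f(K) ⊆ K, then there exists a finite word i₁…i_n over {1,…,m} such that f(K) = φ_{i₁} ∘ ⋯ ∘ φ_{i_n}(K). -/

import Mathlib

/-- Composition `φ_{i₁} ∘ φ_{i₂} ∘ ⋯ ∘ φ_{i_n}` along a finite word. -/
def compWord {ι : Type*} (φ : ι → ℝ → ℝ) (w : List ι) : ℝ → ℝ :=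
  w.foldr (fun i g => φ i ∘ g) id

set_option maxHeartbeats 4000000 in
theorem equal_gap_image (m : ℕ) (hm : 2 ≤ m) (ρ : Fin m → ℝ)
    (hρ0 : ∀ i, 0 < ρ i) (hρ1 : ∀ i, ρ i < 1) (hsum : ∑ i, ρ i < 1)
    (K : Set ℝ) (hKc : IsCompact K) (hKne : K.Nonempty)
    (φ : Fin m → ℝ → ℝ)
    (hφ : ∀ i x, φ i x = ρ i * x + (∑ k ∈ Finset.univ.filter (· < i), ρ k) +
        (i : ℕ) * ((1 - ∑ j, ρ j) / (m - 1)))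
    (hK : K = ⋃ i, φ i '' K)
    (r t : ℝ) (hr0 : 0 < |r|) (hr1 : |r| < 1)
    (hf : (fun x : ℝ => r * x + t) '' K ⊆ K) :
    ∃ w : List (Fin m), (fun x : ℝ => r * x + t) '' K = compWord φ w '' K := by
  -- notation
  set γ : ℝ := (1 - ∑ j, ρ j) / (m - 1) with hγdef
  set a : Fin m → ℝ := fun i => (∑ k ∈ Finset.univ.filter (· < i), ρ k) + (i : ℕ) * γ with hadef
  have hm1 : (1:ℝ) ≤ (m:ℝ) - 1 := by
    have : (2:ℝ) ≤ (m:ℝ) := by exact_mod_cast hm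
    linarith
  have hγ : 0 < γ := div_pos (by linarith) (by linarith)
  have hφ' : ∀ i x, φ i x = ρ i * x + a i := by
    intro i x; rw [hφ]; simp only [hadef]; ring
  -- monotonicity
  have hmono : ∀ i j : Fin m, i < j → a i + ρ i + γ ≤ a j := by
    intro i j hij
    have h1 : (∑ k ∈ Finset.univ.filter (· < i), ρ k) + ρ i ≤
        ∑ k ∈ Finset.univ.filter (· < j), ρ k := by
      have hins : insert i (Finset.univ.filter (· < i)) ⊆ Finset.univ.filter (· < j) := by
        intro k hk
        simp only [Finset.mem_insert, Finset.mem_filter, Finset.mem_univ, true_and] at hk ⊢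
        rcases hk with rfl | hk
        · exact hij
        · exact hk.trans hij
      have hnotmem : i ∉ Finset.univ.filter (· < i) := by simp
      calc (∑ k ∈ Finset.univ.filter (· < i), ρ k) + ρ i
          = ∑ k ∈ insert i (Finset.univ.filter (· < i)), ρ k := by
            rw [Finset.sum_insert hnotmem]; ring
        _ ≤ ∑ k ∈ Finset.univ.filter (· < j), ρ k :=
            Finset.sum_le_sum_of_subset_of_nonneg hins (fun k _ _ => (hρ0 k).le)
    have h2 : ((i:ℕ):ℝ) * γ + γ ≤ ((j:ℕ):ℝ) * γ := by
      have : ((i:ℕ):ℝ) + 1 ≤ ((j:ℕ):ℝ) := by exact_mod_cast hij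
      nlinarith
    simp only [hadef]; linarith
  -- successor equality
  have hsucc : ∀ i j : Fin m, (i:ℕ) + 1 = (j:ℕ) → a j = a i + ρ i + γ := by
    intro i j hij
    have hfil : Finset.univ.filter (· < j) = insert i (Finset.univ.filter (· < i)) := by
      ext k
      simp only [Finset.mem_insert, Finset.mem_filter, Finset.mem_univ, true_and]
      constructor
      · intro hk
        have : (k:ℕ) < (i:ℕ) + 1 := by rw [hij]; exact hk
        rcases Nat.lt_succ_iff_lt_or_eq.mp this with h | h
        · right; exact h
        · left; exact Fin.ext h
      · intro hk
        rcases hk with rfl | hk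
        · exact Fin.lt_def.mpr (by omega)
        · exact Fin.lt_def.mpr (by have := Fin.lt_def.mp hk; omega)
    have hnotmem : i ∉ Finset.univ.filter (· < i) := by simp
    simp only [hadef, hfil, Finset.sum_insert hnotmem]
    have : ((j:ℕ):ℝ) = ((i:ℕ):ℝ) + 1 := by exact_mod_cast hij.symm
    rw [this]; ring
  -- a i ≥ 0
  have hapos : ∀ i, 0 ≤ a i := by
    intro i
    have h1 : 0 ≤ ∑ k ∈ Finset.univ.filter (· < i), ρ k :=
      Finset.sum_nonneg fun k _ => (hρ0 k).le
    have h2 : 0 ≤ ((i:ℕ):ℝ) * γ := by positivity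
    simp only [hadef]; linarith
  -- a i + ρ i ≤ 1
  have hone : ((m:ℝ) - 1) * γ = 1 - ∑ j, ρ j := by
    rw [hγdef]; field_simp
  have hle1 : ∀ i, a i + ρ i ≤ 1 := by
    intro i
    have h1 : (∑ k ∈ Finset.univ.filter (· < i), ρ k) + ρ i ≤ ∑ j, ρ j := by
      have hnotmem : i ∉ Finset.univ.filter (· < i) := by simp
      calc (∑ k ∈ Finset.univ.filter (· < i), ρ k) + ρ i
          = ∑ k ∈ insert i (Finset.univ.filter (· < i)), ρ k := by
            rw [Finset.sum_insert hnotmem]; ring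
        _ ≤ ∑ j, ρ j := Finset.sum_le_sum_of_subset_of_nonneg (Finset.subset_univ _)
            (fun k _ _ => (hρ0 k).le)
    have h2 : ((i:ℕ):ℝ) * γ ≤ ((m:ℝ) - 1) * γ := by
      have : ((i:ℕ):ℝ) ≤ (m:ℝ) - 1 := by
        have := i.isLt
        have : ((i:ℕ):ℝ) + 1 ≤ (m:ℝ) := by exact_mod_cast i.isLt
        linarith
      nlinarith
    simp only [hadef]; linarith
  -- the last index
  have hmpos : 0 < m := by omega
  set il : Fin m := ⟨m - 1, by omega⟩ with hildef
  have hlast : a il + ρ il = 1 := by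
    have hfil : (Finset.univ : Finset (Fin m)) = insert il (Finset.univ.filter (· < il)) := by
      ext k
      constructor
      · intro _
        simp only [Finset.mem_insert, Finset.mem_filter, Finset.mem_univ, true_and]
        rcases eq_or_lt_of_le (Nat.le_of_lt_succ (by have := k.isLt; omega : (k:ℕ) < (m-1)+1)) with h | h
        · exact Or.inl (Fin.ext (by simpa [hildef] using h))
        · exact Or.inr (Fin.lt_def.mpr (by simpa [hildef] using h))
      · intro _; exact Finset.mem_univ k
    have hnotmem : il ∉ Finset.univ.filter (· < il) := by simp
    have hsum' : ∑ j, ρ j = ρ il + ∑ k ∈ Finset.univ.filter (· < il), ρ k := by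
      conv_lhs => rw [hfil]
      rw [Finset.sum_insert hnotmem]
    have hcast : ((il:ℕ):ℝ) = (m:ℝ) - 1 := by
      simp only [hildef]
      have h2 : ((m - 1 : ℕ) : ℝ) = (m:ℝ) - 1 := by
        push_cast [Nat.cast_sub (by omega : 1 ≤ m)]; ring
      simpa using h2
    simp only [hadef]
    rw [hcast, hone]
    linarith [hsum']
  -- φ i maps K into K
  have hφK : ∀ i : Fin m, φ i '' K ⊆ K := by
    intro i
    conv_rhs => rw [hK]
    exact Set.subset_iUnion (fun j => φ j '' K) i
  -- decomposition of points of K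
  have hdec : ∀ x ∈ K, ∃ i : Fin m, ∃ y ∈ K, x = ρ i * y + a i := by
    intro x hx
    rw [hK] at hx
    obtain ⟨S, ⟨i, rfl⟩, y, hy, hxy⟩ := hx
    exact ⟨i, y, hy, by rw [← hxy, hφ']⟩
  -- K ⊆ [0,1]
  have hsupK : sSup K ≤ 1 := by
    obtain ⟨i, y, hy, hxy⟩ := hdec _ (hKc.sSup_mem hKne)
    have h1 : y ≤ sSup K := le_csSup hKc.bddAbove hy
    have h2 := hρ0 i
    have h3 := hρ1 i
    have h4 := hle1 i
    nlinarith
  have hinfK : 0 ≤ sInf K := by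
    obtain ⟨i, y, hy, hxy⟩ := hdec _ (hKc.sInf_mem hKne)
    have h1 : sInf K ≤ y := csInf_le hKc.bddBelow hy
    have h2 := hρ0 i
    have h3 := hρ1 i
    have h4 := hapos i
    nlinarith
  have hK01 : K ⊆ Set.Icc 0 1 := by
    intro x hx
    exact ⟨le_trans hinfK (csInf_le hKc.bddBelow hx),
      le_trans (le_csSup hKc.bddAbove hx) hsupK⟩
  -- 0 ∈ K and 1 ∈ K
  set i0 : Fin m := ⟨0, by omega⟩ with hi0def
  have ha0 : a i0 = 0 := by
    have hfil : Finset.univ.filter (· < i0) = (∅ : Finset (Fin m)) := by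
      ext k; simp [hi0def, Fin.lt_def]
    simp only [hadef]; rw [hfil]; simp [hi0def]
  clear_value γ a
  clear hγdef hadef hφ hone
  have h0K : (0:ℝ) ∈ K := by
    have hmem : sInf K ∈ K := hKc.sInf_mem hKne
    have hmem2 : ρ i0 * sInf K + a i0 ∈ K := by
      have : φ i0 (sInf K) ∈ φ i0 '' K := Set.mem_image_of_mem _ hmem
      rw [hφ'] at this
      exact hφK i0 this
    have h1 : sInf K ≤ ρ i0 * sInf K + a i0 := csInf_le hKc.bddBelow hmem2
    rw [ha0] at h1
    have h2 := hρ0 i0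
    have h3 := hρ1 i0
    have : sInf K = 0 := by nlinarith
    rwa [← this]
  have h1K : (1:ℝ) ∈ K := by
    have hmem : sSup K ∈ K := hKc.sSup_mem hKne
    have hmem2 : ρ il * sSup K + a il ∈ K := by
      have : φ il (sSup K) ∈ φ il '' K := Set.mem_image_of_mem _ hmem
      rw [hφ'] at this
      exact hφK il this
    have h1 : ρ il * sSup K + a il ≤ sSup K := le_csSup hKc.bddAbove hmem2
    have h2 := hρ0 il
    have h3 := hρ1 il
    have : sSup K = 1 := by nlinarith [hlast]
    rwa [← this]
  -- endpoints of pieces belong to K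
  have haK : ∀ i : Fin m, a i ∈ K := by
    intro i
    have : φ i 0 ∈ φ i '' K := Set.mem_image_of_mem _ h0K
    rw [hφ'] at this
    simpa using hφK i this
  have harK : ∀ i : Fin m, a i + ρ i ∈ K := by
    intro i
    have : φ i 1 ∈ φ i '' K := Set.mem_image_of_mem _ h1K
    rw [hφ'] at this
    have h := hφK i this
    rw [mul_one] at h
    rwa [add_comm (ρ i) (a i)] at h
  -- every point of K lies left of a gap or right of it
  have hLR : ∀ (i : Fin m), ∀ x ∈ K, x ≤ a i + ρ i ∨ a i + ρ i + γ ≤ x := by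
    intro i x hx
    obtain ⟨l, y, hy, rfl⟩ := hdec x hx
    obtain ⟨hy0, hy1⟩ := hK01 hy
    have hρl := hρ0 l
    have hyb : ρ l * y ≤ ρ l * 1 := mul_le_mul_of_nonneg_left hy1 hρl.le
    have hyc : 0 ≤ ρ l * y := mul_nonneg hρl.le hy0
    rcases le_or_gt l i with hli | hil
    · left
      rcases eq_or_lt_of_le hli with rfl | hli
      · linarith
      · have h1 := hmono l i hli
        have h2 := hρ0 i
        linarith
    · right
      have h1 := hmono i l hil
      linarith
  -- slices of K
  have hslice : ∀ i : Fin m, ∀ x ∈ K, x ∈ Set.Icc (a i) (a i + ρ i) → x ∈ φ i '' K := by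
    intro i x hx ⟨hx1, hx2⟩
    obtain ⟨l, y, hy, rfl⟩ := hdec x hx
    obtain ⟨hy0, hy1⟩ := hK01 hy
    have hρl := hρ0 l
    have hyb : ρ l * y ≤ ρ l * 1 := mul_le_mul_of_nonneg_left hy1 hρl.le
    have hyc : 0 ≤ ρ l * y := mul_nonneg hρl.le hy0
    have hli : l = i := by
      by_contra hne
      rcases lt_or_gt_of_ne hne with h | h
      · have h1 := hmono l i h
        linarith
      · have h1 := hmono i l h
        have h2 := hρ0 i
        linarith
    subst hli
    exact ⟨y, hy, by rw [hφ']⟩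
  -- maximal contraction ratio
  obtain ⟨iR, -, hiR⟩ := Finset.exists_max_image Finset.univ ρ ⟨i0, Finset.mem_univ i0⟩
  set R : ℝ := ρ iR with hRdef
  have hR0 : 0 < R := hρ0 iR
  have hR1 : R < 1 := hρ1 iR
  have hRmax : ∀ i, ρ i ≤ R := fun i => hiR i (Finset.mem_univ i)
  -- the gap lemma: every gap of K has length at most γ
  have hgaplem : ∀ n : ℕ, ∀ u v : ℝ, u ∈ K → v ∈ K → u < v →
      (∀ x ∈ K, x ∉ Set.Ioo u v) → R ^ n < v - u → v - u ≤ γ := by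
    intro n
    induction n with
    | zero =>
      intro u v hu hv huv hemp hlt
      exfalso
      obtain ⟨hu0, -⟩ := hK01 hu
      obtain ⟨-, hv1⟩ := hK01 hv
      simp only [pow_zero] at hlt
      linarith
    | succ n ih =>
      intro u v hu hv huv hemp hlt
      obtain ⟨i, u₀, hu₀, rfl⟩ := hdec u hu
      obtain ⟨j, v₀, hv₀, rfl⟩ := hdec v hv
      obtain ⟨hu₀0, hu₀1⟩ := hK01 hu₀
      obtain ⟨hv₀0, hv₀1⟩ := hK01 hv₀
      have hρi := hρ0 i
      have hρj := hρ0 j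
      have hbi1 : ρ i * u₀ ≤ ρ i * 1 := mul_le_mul_of_nonneg_left hu₀1 hρi.le
      have hbi0 : 0 ≤ ρ i * u₀ := mul_nonneg hρi.le hu₀0
      have hbj1 : ρ j * v₀ ≤ ρ j * 1 := mul_le_mul_of_nonneg_left hv₀1 hρj.le
      have hbj0 : 0 ≤ ρ j * v₀ := mul_nonneg hρj.le hv₀0
      rcases lt_trichotomy i j with hij | rfl | hij
      · -- u in piece i, v in piece j, i < j : the gap is exactly the hole of length γ
        have hmij := hmono i j hij
        have hub : ρ i * u₀ + a i ≤ a i + ρ i := by linarith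
        have hvb : a j ≤ ρ j * v₀ + a j := by linarith
        -- right endpoint of piece i equals u
        have hu' : ρ i * u₀ + a i = a i + ρ i := by
          by_contra hne
          have hlt' : ρ i * u₀ + a i < a i + ρ i := lt_of_le_of_ne hub hne
          exact hemp _ (harK i) ⟨hlt', by linarith⟩
        -- left endpoint of piece j equals v
        have hv' : ρ j * v₀ + a j = a j := by
          by_contra hne
          have hlt' : a j < ρ j * v₀ + a j := lt_of_le_of_ne hvb (Ne.symm hne)
          exact hemp _ (haK j) ⟨by linarith, hlt'⟩
        -- j must be the successor of i
        have hijn : (i:ℕ) < (j:ℕ) := hij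
        have hi'lt : (i:ℕ) + 1 < m := lt_of_le_of_lt hijn j.isLt
        rcases eq_or_lt_of_le (show (i:ℕ) + 1 ≤ (j:ℕ) from hijn) with heq | hlt2
        · have := hsucc i j heq
          linarith
        · exfalso
          have hii' : i < (⟨(i:ℕ) + 1, hi'lt⟩ : Fin m) := Fin.lt_def.mpr (by simp)
          have h1 := hmono i ⟨(i:ℕ) + 1, hi'lt⟩ hii'
          have h2 := hmono ⟨(i:ℕ) + 1, hi'lt⟩ j (Fin.lt_def.mpr hlt2)
          have hρi' := hρ0 (⟨(i:ℕ) + 1, hi'lt⟩ : Fin m)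
          exact hemp _ (haK ⟨(i:ℕ) + 1, hi'lt⟩) ⟨by linarith, by linarith⟩
      · -- same piece: zoom in
        have hmullt : ρ i * u₀ < ρ i * v₀ := by linarith
        have huv₀ : u₀ < v₀ := lt_of_mul_lt_mul_left hmullt hρi.le
        have hemp₀ : ∀ x ∈ K, x ∉ Set.Ioo u₀ v₀ := by
          intro x hx ⟨h1, h2⟩
          have hx' : ρ i * x + a i ∈ K := by
            have : φ i x ∈ φ i '' K := Set.mem_image_of_mem _ hx
            rw [hφ'] at this
            exact hφK i this
          have hl1 : ρ i * u₀ < ρ i * x := mul_lt_mul_of_pos_left h1 hρi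
          have hl2 : ρ i * x < ρ i * v₀ := mul_lt_mul_of_pos_left h2 hρi
          exact hemp _ hx' ⟨by linarith, by linarith⟩
        have hlt₀ : R ^ n < v₀ - u₀ := by
          have h2 : R ^ n * ρ i ≤ R ^ n * R :=
            mul_le_mul_of_nonneg_left (hRmax i) (pow_nonneg hR0.le n)
          have h3 : R ^ n * R = R ^ (n + 1) := by ring
          have h4 : ρ i * R ^ n < ρ i * (v₀ - u₀) := by
            have e1 : ρ i * (v₀ - u₀) = (ρ i * v₀ + a i) - (ρ i * u₀ + a i) := by ring
            have e2 : ρ i * R ^ n = R ^ n * ρ i := mul_comm _ _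
            linarith
          exact lt_of_mul_lt_mul_left h4 hρi.le
        have hle := ih u₀ v₀ hu₀ hv₀ huv₀ hemp₀ hlt₀
        have h5 : ρ i * (v₀ - u₀) ≤ ρ i * γ := mul_le_mul_of_nonneg_left hle hρi.le
        have h6 : ρ i * γ ≤ 1 * γ := mul_le_mul_of_nonneg_right (hρ1 i).le hγ.le
        have e1 : ρ i * (v₀ - u₀) = (ρ i * v₀ + a i) - (ρ i * u₀ + a i) := by ring
        linarith
      · -- impossible ordering
        exfalso
        have h1 := hmono j i hij
        linarith
  -- step lemma: a strictly contracting similitude image lies in one piece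
  have hstep : ∀ s c : ℝ, s ≠ 0 → |s| < 1 → (fun x : ℝ => s * x + c) '' K ⊆ K →
      ∃ i : Fin m, (fun x : ℝ => s * x + c) '' K ⊆ φ i '' K := by
    intro s c hs hs1 hsub
    obtain ⟨F, hFdef⟩ : ∃ F, F = (fun x : ℝ => s * x + c) '' K := ⟨_, rfl⟩
    have hFc : IsCompact F := hFdef ▸ hKc.image (by fun_prop)
    have hFne : F.Nonempty := hFdef ▸ hKne.image _
    have hFsub : F ⊆ K := hFdef ▸ hsub
    have hmemF : ∀ x ∈ K, s * x + c ∈ F := fun x hx => hFdef ▸ ⟨x, hx, rfl⟩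
    have hdecF : ∀ y ∈ F, ∃ x ∈ K, s * x + c = y := by
      intro y hy; rw [hFdef] at hy; obtain ⟨x, hx, hxy⟩ := hy; exact ⟨x, hx, hxy⟩
    suffices h : ∃ i : Fin m, F ⊆ φ i '' K by
      obtain ⟨i, hi⟩ := h; exact ⟨i, hFdef ▸ hi⟩
    obtain ⟨p, hpdef⟩ : ∃ p, p = sInf F := ⟨_, rfl⟩
    obtain ⟨q, hqdef⟩ : ∃ q, q = sSup F := ⟨_, rfl⟩
    have hpF : p ∈ F := hpdef ▸ hFc.sInf_mem hFne
    have hqF : q ∈ F := hqdef ▸ hFc.sSup_mem hFne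
    have hpl : ∀ x ∈ F, p ≤ x := fun x hx => hpdef ▸ csInf_le hFc.bddBelow hx
    have hqu : ∀ x ∈ F, x ≤ q := fun x hx => hqdef ▸ le_csSup hFc.bddAbove hx
    have hpq : p ≤ q := hpl q hqF
    obtain ⟨i, p₀, hp₀, hpe⟩ := hdec _ (hFsub hpF)
    obtain ⟨j, q₀, hq₀, hqe⟩ := hdec _ (hFsub hqF)
    obtain ⟨hp₀0, hp₀1⟩ := hK01 hp₀
    obtain ⟨hq₀0, hq₀1⟩ := hK01 hq₀
    have hρi := hρ0 i
    have hρj := hρ0 j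
    have hbi1 : ρ i * p₀ ≤ ρ i * 1 := mul_le_mul_of_nonneg_left hp₀1 hρi.le
    have hbi0 : 0 ≤ ρ i * p₀ := mul_nonneg hρi.le hp₀0
    have hbj1 : ρ j * q₀ ≤ ρ j * 1 := mul_le_mul_of_nonneg_left hq₀1 hρj.le
    have hbj0 : 0 ≤ ρ j * q₀ := mul_nonneg hρj.le hq₀0
    rcases lt_trichotomy i j with hij | rfl | hij
    · -- impossible: image would straddle a gap of length γ
      exfalso
      have hmij := hmono i j hij
      obtain ⟨A, hAdef⟩ : ∃ A, A = F ∩ Set.Iic (a i + ρ i) := ⟨_, rfl⟩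
      obtain ⟨B, hBdef⟩ : ∃ B, B = F ∩ Set.Ici (a i + ρ i + γ) := ⟨_, rfl⟩
      have hAc : IsCompact A := hAdef ▸ hFc.inter_right isClosed_Iic
      have hBc : IsCompact B := hBdef ▸ hFc.inter_right isClosed_Ici
      have hAmem : ∀ x, x ∈ A ↔ (x ∈ F ∧ x ≤ a i + ρ i) := by
        intro x; rw [hAdef]; exact Iff.rfl
      have hBmem : ∀ x, x ∈ B ↔ (x ∈ F ∧ a i + ρ i + γ ≤ x) := by
        intro x; rw [hBdef]; exact Iff.rfl
      have hAne : A.Nonempty := ⟨p, (hAmem p).mpr ⟨hpF, by rw [hpe]; linarith⟩⟩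
      have hBne : B.Nonempty := ⟨q, (hBmem q).mpr ⟨hqF, by rw [hqe]; linarith⟩⟩
      obtain ⟨u, hudef⟩ : ∃ u, u = sSup A := ⟨_, rfl⟩
      obtain ⟨v, hvdef⟩ : ∃ v, v = sInf B := ⟨_, rfl⟩
      have huA : u ∈ A := hudef ▸ hAc.sSup_mem hAne
      have hvB : v ∈ B := hvdef ▸ hBc.sInf_mem hBne
      have huF : u ∈ F := ((hAmem u).mp huA).1
      have hvF : v ∈ F := ((hBmem v).mp hvB).1
      have hub : u ≤ a i + ρ i := ((hAmem u).mp huA).2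
      have hvb : a i + ρ i + γ ≤ v := ((hBmem v).mp hvB).2
      have huv : u < v := by linarith
      have hemp : ∀ x ∈ F, x ∉ Set.Ioo u v := by
        intro x hx ⟨h1, h2⟩
        rcases hLR i x (hFsub hx) with h | h
        · have : x ≤ u := hudef ▸ le_csSup hAc.bddAbove ((hAmem x).mpr ⟨hx, h⟩)
          linarith
        · have : v ≤ x := hvdef ▸ csInf_le hBc.bddBelow ((hBmem x).mpr ⟨hx, h⟩)
          linarith
      obtain ⟨u₀, hu₀, hue⟩ := hdecF u huF
      obtain ⟨v₀, hv₀, hve⟩ := hdecF v hvF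
      have hvu : γ ≤ v - u := by linarith
      rcases lt_or_gt_of_ne hs with hneg | hpos
      · -- s < 0
        have habs : |s| = -s := abs_of_neg hneg
        have hms : 0 < -s := by linarith
        have hsw : (-s) * v₀ < (-s) * u₀ := by
          have h0 : s * u₀ < s * v₀ := by linarith
          linarith
        have hw21 : v₀ < u₀ := lt_of_mul_lt_mul_left hsw hms.le
        have hempK' : ∀ x ∈ K, x ∉ Set.Ioo v₀ u₀ := by
          intro x hx ⟨h1, h2⟩
          have hx' : s * x + c ∈ F := hmemF x hx
          have hl1 : s * x < s * v₀ := mul_lt_mul_of_neg_left h1 hneg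
          have hl2 : s * u₀ < s * x := mul_lt_mul_of_neg_left h2 hneg
          exact hemp _ hx' ⟨by linarith, by linarith⟩
        obtain ⟨n, hn⟩ := exists_pow_lt_of_lt_one (by linarith : (0:ℝ) < u₀ - v₀) hR1
        have hglem := hgaplem n v₀ u₀ hv₀ hu₀ hw21 hempK' hn
        have he3 : (-s) * (u₀ - v₀) = v - u := by linear_combination hve - hue
        have he4 : (-s) * (u₀ - v₀) < 1 * (u₀ - v₀) :=
          mul_lt_mul_of_pos_right (by linarith) (by linarith)
        linarith
      · -- s > 0
        have habs : |s| = s := abs_of_pos hpos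
        have hsw : s * u₀ < s * v₀ := by linarith
        have hw12 : u₀ < v₀ := lt_of_mul_lt_mul_left hsw hpos.le
        have hempK' : ∀ x ∈ K, x ∉ Set.Ioo u₀ v₀ := by
          intro x hx ⟨h1, h2⟩
          have hx' : s * x + c ∈ F := hmemF x hx
          have hl1 : s * u₀ < s * x := mul_lt_mul_of_pos_left h1 hpos
          have hl2 : s * x < s * v₀ := mul_lt_mul_of_pos_left h2 hpos
          exact hemp _ hx' ⟨by linarith, by linarith⟩
        obtain ⟨n, hn⟩ := exists_pow_lt_of_lt_one (by linarith : (0:ℝ) < v₀ - u₀) hR1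
        have hglem := hgaplem n u₀ v₀ hu₀ hv₀ hw12 hempK' hn
        have he3 : s * (v₀ - u₀) = v - u := by linear_combination hve - hue
        have he4 : s * (v₀ - u₀) < 1 * (v₀ - u₀) :=
          mul_lt_mul_of_pos_right (by linarith) (by linarith)
        linarith
    · -- same piece: F ⊆ φ i '' K
      refine ⟨i, fun x hx => ?_⟩
      have hxK := hFsub hx
      have hxl : p ≤ x := hpl x hx
      have hxu : x ≤ q := hqu x hx
      rw [hpe] at hxl
      rw [hqe] at hxu
      exact hslice i x hxK ⟨by linarith, by linarith⟩
    · -- impossible ordering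
      exfalso
      have h1 := hmono j i hij
      have h2 : a i ≤ p := by rw [hpe]; linarith
      have h3 : q ≤ a j + ρ j := by rw [hqe]; linarith
      linarith
  -- main induction
  have hmain : ∀ n : ℕ, ∀ s c : ℝ, s ≠ 0 → (fun x : ℝ => s * x + c) '' K ⊆ K →
      R ^ n < |s| → ∃ w : List (Fin m), (fun x : ℝ => s * x + c) '' K = compWord φ w '' K := by
    intro n
    induction n with
    | zero =>
      intro s c hs hsub hlt
      exfalso
      have h0 : s * 0 + c ∈ K := hsub ⟨0, h0K, rfl⟩
      have h1 : s * 1 + c ∈ K := hsub ⟨1, h1K, rfl⟩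
      obtain ⟨h0a, h0b⟩ := hK01 h0
      obtain ⟨h1a, h1b⟩ := hK01 h1
      have : |s| ≤ 1 := by
        rcases abs_cases s with ⟨he, -⟩ | ⟨he, -⟩ <;> nlinarith
      simp only [pow_zero] at hlt
      linarith
    | succ n ih =>
      intro s c hs hsub hlt
      have h0 : s * 0 + c ∈ K := hsub ⟨0, h0K, rfl⟩
      have h1 : s * 1 + c ∈ K := hsub ⟨1, h1K, rfl⟩
      obtain ⟨h0a, h0b⟩ := hK01 h0
      obtain ⟨h1a, h1b⟩ := hK01 h1
      have habs1 : |s| ≤ 1 := by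
        rcases abs_cases s with ⟨he, -⟩ | ⟨he, -⟩ <;> nlinarith
      rcases eq_or_lt_of_le habs1 with heq | hlt1
      · -- |s| = 1 : the map is the identity or the reflection, image is K
        refine ⟨[], ?_⟩
        have hcw : compWord φ ([] : List (Fin m)) '' K = K := by
          simp [compWord]
        rw [hcw]
        rcases abs_cases s with ⟨he, -⟩ | ⟨he, -⟩
        · -- s = 1, c = 0
          have hs1 : s = 1 := by rw [← he, heq]
          have hc0 : c = 0 := by rw [hs1] at h0a h1b; simp at h0a h1b; linarith
          subst hs1; subst hc0
          simp
        · -- s = -1, c = 1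
          have hs1 : s = -1 := by
            have : -s = 1 := by rw [← he, heq]
            linarith
          have hc1 : c = 1 := by rw [hs1] at h0b h1a; simp at h0b h1a; linarith
          subst hs1; subst hc1
          apply Set.Subset.antisymm hsub
          intro x hx
          have hx' : -1 * x + 1 ∈ K := hsub ⟨x, hx, rfl⟩
          exact ⟨-1 * x + 1, hx', by ring⟩
      · -- |s| < 1 : descend into a piece
        obtain ⟨i, hi⟩ := hstep s c hs hlt1 hsub
        have hρi := hρ0 i
        obtain ⟨s', hs'def⟩ : ∃ s', s' = s / ρ i := ⟨_, rfl⟩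
        obtain ⟨c', hc'def⟩ : ∃ c', c' = (c - a i) / ρ i := ⟨_, rfl⟩
        have hcomp : ∀ x, φ i (s' * x + c') = s * x + c := by
          intro x
          rw [hφ', hs'def, hc'def]
          field_simp
          ring
        have hs' : s' ≠ 0 := by
          rw [hs'def]
          exact div_ne_zero hs (ne_of_gt hρi)
        have hgsub : (fun x : ℝ => s' * x + c') '' K ⊆ K := by
          rintro y ⟨x, hx, rfl⟩
          have himg : s * x + c ∈ φ i '' K := hi ⟨x, hx, rfl⟩
          obtain ⟨z, hz, hze⟩ := himg
          rw [hφ'] at hze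
          have : ρ i * z + a i = ρ i * (s' * x + c') + a i := by
            rw [hze, ← hcomp x, hφ']
          have hz' : z = s' * x + c' := by
            have h2 : ρ i * z = ρ i * (s' * x + c') := by linarith
            exact mul_left_cancel₀ (ne_of_gt hρi) h2
          show s' * x + c' ∈ K
          rw [← hz']
          exact hz
        have hlt' : R ^ n < |s'| := by
          have habs : |s'| = |s| / ρ i := by
            rw [hs'def, abs_div, abs_of_pos hρi]
          have h1' : |s| / R ≤ |s| / ρ i :=
            div_le_div_of_nonneg_left (abs_nonneg s) hρi (hRmax i)
          have h2' : R ^ (n+1) / R < |s| / R := by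
            apply div_lt_div_of_pos_right hlt hR0
          have h3' : R ^ (n+1) / R = R ^ n := by
            field_simp
            ring
          rw [habs]
          calc R ^ n = R ^ (n+1) / R := h3'.symm
            _ < |s| / R := h2'
            _ ≤ |s| / ρ i := h1'
        obtain ⟨w, hw⟩ := ih s' c' hs' hgsub hlt'
        refine ⟨i :: w, ?_⟩
        have hfe : (fun x : ℝ => s * x + c) = φ i ∘ (fun x : ℝ => s' * x + c') :=
          funext fun x => (hcomp x).symm
        have hcw : compWord φ (i :: w) = φ i ∘ compWord φ w := rfl
        rw [hfe, hcw, Set.image_comp, Set.image_comp, hw]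
  obtain ⟨n, hn⟩ := exists_pow_lt_of_lt_one hr0 hR1
  exact hmain n r t (by intro h; rw [h] at hr0; simp at hr0) hf hn
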